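/- With x_n, r_n as above, for every n ≥ 1: (m+1)^n · ((m+1)x + r) ≡ ∑_{k=1}^n (m+1)^{n−k} m^{k−1} r_k (mod m^n). -/

import Mathlib

theorem rotation_congruence (m : ℕ) (hm : 1 ≤ m) (x r : ℕ → ℕ)
    (hx0 : 1 ≤ x 0) (hr0 : r 0 < m)
    (hxrec : ∀ n, x (n + 1) = x n + (x n + r n) / m)
    (hrrec : ∀ n, r (n + 1) = x n + r n - m * ((x n + r n) / m)) :
    ∀ n : ℕ, 1 ≤ n →
      ((m : ℤ) + 1) ^ n * (((m : ℤ) + 1) * (x 0 : ℤ) + (r 0 : ℤ)) ≡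
        ∑ k ∈ Finset.Icc 1 n, ((m : ℤ) + 1) ^ (n - k) * (m : ℤ) ^ (k - 1) * (r k : ℤ)
      [ZMOD (m : ℤ) ^ n] := by
  have key : ∀ k, ((m : ℤ) + 1) * (x k : ℤ) + (r k : ℤ)
      = (m : ℤ) * (x (k+1) : ℤ) + (r (k+1) : ℤ) := by
    intro k
    have hq : m * ((x k + r k) / m) ≤ x k + r k := Nat.mul_div_le _ m
    rw [hxrec k, hrrec k]
    push_cast [Nat.cast_sub hq]
    ring
  have H : ∀ n : ℕ, ((m : ℤ) + 1) ^ n * (((m : ℤ) + 1) * (x 0 : ℤ) + (r 0 : ℤ))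
      = (∑ k ∈ Finset.Icc 1 n, ((m : ℤ) + 1) ^ (n - k) * (m : ℤ) ^ (k - 1) * (r k : ℤ))
        + (m : ℤ) ^ n * (((m : ℤ) + 1) * (x n : ℤ) + (r n : ℤ)) := by
    intro n
    induction n with
    | zero => simp
    | succ n ih =>
      rw [Finset.sum_Icc_succ_top (by omega : 1 ≤ n + 1)]
      have hsum : ∑ k ∈ Finset.Icc 1 n, ((m : ℤ) + 1) ^ (n + 1 - k) * (m : ℤ) ^ (k - 1) * (r k : ℤ)
          = ((m : ℤ) + 1) * ∑ k ∈ Finset.Icc 1 n, ((m : ℤ) + 1) ^ (n - k) * (m : ℤ) ^ (k - 1) * (r k : ℤ) := by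
        rw [Finset.mul_sum]
        refine Finset.sum_congr rfl ?_
        intro k hk
        simp only [Finset.mem_Icc] at hk
        have h1 : n + 1 - k = (n - k) + 1 := by omega
        rw [h1, pow_succ]
        ring
      rw [hsum]
      have h2 : n + 1 - (n + 1) = 0 := by omega
      have h3 : n + 1 - 1 = n := by omega
      rw [h2, h3]
      have hk := key n
      calc ((m : ℤ) + 1) ^ (n + 1) * (((m : ℤ) + 1) * (x 0 : ℤ) + (r 0 : ℤ))
          = ((m : ℤ) + 1) * (((m : ℤ) + 1) ^ n * (((m : ℤ) + 1) * (x 0 : ℤ) + (r 0 : ℤ))) := by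
            ring
        _ = ((m : ℤ) + 1) * ((∑ k ∈ Finset.Icc 1 n, ((m : ℤ) + 1) ^ (n - k) * (m : ℤ) ^ (k - 1) * (r k : ℤ))
              + (m : ℤ) ^ n * (((m : ℤ) + 1) * (x n : ℤ) + (r n : ℤ))) := by rw [ih]
        _ = ((m : ℤ) + 1) * (∑ k ∈ Finset.Icc 1 n, ((m : ℤ) + 1) ^ (n - k) * (m : ℤ) ^ (k - 1) * (r k : ℤ))
              + (m : ℤ) ^ n * (((m : ℤ) + 1) * ((m : ℤ) * (x (n+1) : ℤ) + (r (n+1) : ℤ))) := by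
            rw [← hk]; ring
        _ = ((m : ℤ) + 1) * (∑ k ∈ Finset.Icc 1 n, ((m : ℤ) + 1) ^ (n - k) * (m : ℤ) ^ (k - 1) * (r k : ℤ))
              + ((m : ℤ) + 1) ^ 0 * (m : ℤ) ^ n * (r (n+1) : ℤ)
              + (m : ℤ) ^ (n + 1) * (((m : ℤ) + 1) * (x (n+1) : ℤ) + (r (n+1) : ℤ)) := by
            rw [pow_succ]; ring
  intro n hn
  rw [H n]
  have : (∑ k ∈ Finset.Icc 1 n, ((m : ℤ) + 1) ^ (n - k) * (m : ℤ) ^ (k - 1) * (r k : ℤ))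
      + (m : ℤ) ^ n * (((m : ℤ) + 1) * (x n : ℤ) + (r n : ℤ))
      ≡ (∑ k ∈ Finset.Icc 1 n, ((m : ℤ) + 1) ^ (n - k) * (m : ℤ) ^ (k - 1) * (r k : ℤ)) + 0
      [ZMOD (m : ℤ) ^ n] := by
    refine Int.ModEq.add_left _ ?_
    simp [Int.modEq_zero_iff_dvd]
  simpa using this
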